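/- arXiv:math/0201106 — 4 statements merged into one kernel-verified Lean document; each statement's English description precedes it below -/
import Mathlib

section
/- Let Y be a finite connected graph with Euler characteristic 1 - k, where k ≥ 2, such that every vertex of Y has degree at least three. Then every simple path in Y contains at most 2k - 3 edges. -/
/-- Connectivity of a multigraph (given by an endpoints map `ends`) using only
edges from the set `S`. -/
def ConnVia {V E : Type} (ends : E → Sym2 V) (S : Set E) : Prop :=
  ∀ u v : V, Relation.ReflTransGen (fun a b => ∃ e ∈ S, ends e = s(a, b)) u v

/-- Degree of a vertex in a multigraph: number of incident edge-ends
(a loop counts twice). -/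
def mdegree {V E : Type} [Fintype E] [DecidableEq V] (ends : E → Sym2 V) (v : V) : ℕ :=
  ∑ e : E, (if ends e = s(v, v) then 2 else if v ∈ ends e then 1 else 0)

/-- Handshake lemma for multigraphs. -/
lemma handshake {V E : Type} [Fintype V] [Fintype E] [DecidableEq V] (ends : E → Sym2 V) :
    ∑ v : V, mdegree ends v = 2 * Fintype.card E := by
  unfold mdegree
  rw [Finset.sum_comm]
  have key : ∀ e : E, ∑ v : V, (if ends e = s(v, v) then 2 else if v ∈ ends e then 1 else 0) = 2 := by
    intro e
    generalize ends e = p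
    induction p using Sym2.ind with
    | _ a b =>
      by_cases hab : a = b
      · subst hab
        have h1 : ∀ v : V, (if s(a, a) = s(v, v) then 2 else if v ∈ s(a, a) then 1 else 0)
            = if v = a then 2 else 0 := by
          intro v
          by_cases h : v = a
          · subst h; simp
          · simp [h, Sym2.eq_iff, Sym2.mem_iff, Ne.symm h]
        rw [Finset.sum_congr rfl (fun v _ => h1 v), Finset.sum_ite_eq' Finset.univ a (fun _ => 2)]
        simp
      · have h1 : ∀ v : V, (if s(a, b) = s(v, v) then 2 else if v ∈ s(a, b) then 1 else 0)
            = (if v = a then 1 else 0) + (if v = b then 1 else 0) := by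
          intro v
          by_cases h1 : v = a <;> by_cases h2 : v = b <;>
            simp_all [Sym2.eq_iff, Sym2.mem_iff, Ne.symm]
        rw [Finset.sum_congr rfl (fun v _ => h1 v), Finset.sum_add_distrib,
          Finset.sum_ite_eq' Finset.univ a (fun _ => 1),
          Finset.sum_ite_eq' Finset.univ b (fun _ => 1)]
        simp
  rw [Finset.sum_congr rfl (fun e _ => key e), Finset.sum_const, Finset.card_univ,
    smul_eq_mul, mul_comm]

theorem stmt1 {V E : Type} [Fintype V] [Fintype E] [DecidableEq V]
    (ends : E → Sym2 V) (k : ℕ) (hk : 2 ≤ k)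
    (hconn : ConnVia ends Set.univ)
    (heuler : (Fintype.card V : ℤ) - Fintype.card E = 1 - k)
    (hdeg : ∀ v : V, 3 ≤ mdegree ends v)
    -- a simple path with `m` edges: `m + 1` pairwise distinct vertices joined by edges
    (m : ℕ) (vs : Fin (m + 1) → V) (es : Fin m → E)
    (hvs : Function.Injective vs)
    (hpath : ∀ i : Fin m, ends (es i) = s(vs i.castSucc, vs i.succ)) :
    m ≤ 2 * k - 3 := by
  have hcard : m + 1 ≤ Fintype.card V := by
    simpa using Fintype.card_le_of_injective vs hvs
  have hsum : 3 * Fintype.card V ≤ 2 * Fintype.card E := by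
    calc 3 * Fintype.card V = ∑ _v : V, 3 := by
          rw [Finset.sum_const, Finset.card_univ, smul_eq_mul, mul_comm]
      _ ≤ ∑ v : V, mdegree ends v := Finset.sum_le_sum (fun v _ => hdeg v)
      _ = 2 * Fintype.card E := handshake ends
  omega
end

section
/- Let G be a group, H a subgroup of G that is separable in G, and H₁ a subgroup with H ≤ H₁ ≤ G and [H₁ : H] < ∞. Then H₁ is separable in G. -/
/-- A subgroup `H ≤ G` is separable if every `g ∉ H` can be separated from `H`
by a homomorphism onto a finite group. -/
def SubgroupSeparable {G : Type} [Group G] (H : Subgroup G) : Prop :=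
  ∀ g : G, g ∉ H →
    ∃ (K : Type) (_ : Group K) (ψ : G →* K),
      Finite K ∧ Function.Surjective ψ ∧ ψ g ∉ H.map ψ

/-- Separation by a normal finite-index subgroup. -/
lemma sep_normal {G : Type} [Group G] (H : Subgroup G) (hsep : SubgroupSeparable H)
    (g : G) (hg : g ∉ H) :
    ∃ N : Subgroup G, N.Normal ∧ N.FiniteIndex ∧ g ∉ H ⊔ N := by
  obtain ⟨K, _, ψ, hK, hsurj, hmem⟩ := hsep g hg
  refine ⟨ψ.ker, MonoidHom.normal_ker ψ, ?_, ?_⟩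
  · constructor
    rw [Subgroup.index_ker]
    have : ψ.range = ⊤ := MonoidHom.range_eq_top.mpr hsurj
    rw [this]
    have : Nat.card (⊤ : Subgroup K) = Nat.card K := by
      simpa using Nat.card_congr Subgroup.topEquiv.toEquiv
    rw [this]
    exact Nat.card_ne_zero.mpr ⟨⟨1⟩, hK⟩
  · intro hmem'
    rw [← SetLike.mem_coe, Subgroup.mul_normal] at hmem'
    obtain ⟨h, hh, n, hn, rfl⟩ := hmem'
    apply hmem
    have : ψ (h * n) = ψ h := by
      simp [map_mul, MonoidHom.mem_ker.mp hn]
    rw [this]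
    exact Subgroup.mem_map_of_mem ψ hh

lemma normal_of_sep {G : Type} [Group G] (H : Subgroup G)
    (hsep : ∀ g : G, g ∉ H → ∃ N : Subgroup G, N.Normal ∧ N.FiniteIndex ∧ g ∉ H ⊔ N) :
    SubgroupSeparable H := by
  intro g hg
  obtain ⟨N, hN, hfi, hg'⟩ := hsep g hg
  refine ⟨G ⧸ N, inferInstance, QuotientGroup.mk' N,
    N.finite_quotient_of_finiteIndex, QuotientGroup.mk'_surjective N, ?_⟩
  rintro ⟨h, hh, heq⟩
  apply hg'
  rw [← SetLike.mem_coe, Subgroup.mul_normal]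
  have : h⁻¹ * g ∈ N := by
    rw [← QuotientGroup.eq]
    exact heq
  exact ⟨h, hh, h⁻¹ * g, this, by group⟩

theorem stmt3 {G : Type} [Group G] (H H₁ : Subgroup G)
    (hsep : SubgroupSeparable H) (hle : H ≤ H₁)
    (hfin : H.relIndex H₁ ≠ 0) :
    SubgroupSeparable H₁ := by
  apply normal_of_sep
  intro g hg
  -- the quotient H₁ / H is finite
  have hFI : (H.subgroupOf H₁).FiniteIndex := ⟨hfin⟩
  have : Finite (H₁ ⧸ H.subgroupOf H₁) := (H.subgroupOf H₁).finite_quotient_of_finiteIndex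
  set Q := H₁ ⧸ H.subgroupOf H₁
  -- transversal
  let x : Q → H₁ := fun q => Quotient.out q
  -- each x q⁻¹ * g is not in H
  have hx : ∀ q : Q, ((x q : G))⁻¹ * g ∉ H := by
    intro q hmem
    apply hg
    have : g = (x q : G) * (((x q : G))⁻¹ * g) := by group
    rw [this]
    exact H₁.mul_mem (x q).2 (hle hmem)
  -- choose separating normal subgroups
  choose N hNnormal hNfi hNg using fun q => sep_normal H hsep _ (hx q)
  refine ⟨⨅ q : Q, N q, ?_, ?_, ?_⟩
  · constructor
    intro n hn k
    rw [Subgroup.mem_iInf] at hn ⊢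
    exact fun q => (hNnormal q).conj_mem n (hn q) k
  · exact Subgroup.finiteIndex_iInf hNfi
  · intro hmem
    have hNinf : (⨅ q : Q, N q).Normal := by
      constructor
      intro n hn k
      rw [Subgroup.mem_iInf] at hn ⊢
      exact fun q => (hNnormal q).conj_mem n (hn q) k
    rw [← SetLike.mem_coe, Subgroup.mul_normal] at hmem
    obtain ⟨h₁, hh₁, n, hn, rfl⟩ := hmem
    set q : Q := QuotientGroup.mk ⟨h₁, hh₁⟩
    have hq : ((x q : G))⁻¹ * h₁ ∈ H := by
      have : QuotientGroup.mk (x q) = QuotientGroup.mk (⟨h₁, hh₁⟩ : H₁) :=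
        QuotientGroup.out_eq' q
      rw [QuotientGroup.eq] at this
      simpa using Subgroup.mem_subgroupOf.mp this
    apply hNg q
    rw [← SetLike.mem_coe, Subgroup.mul_normal]
    have hnq : n ∈ N q := (Subgroup.mem_iInf.mp hn) q
    exact ⟨((x q : G))⁻¹ * h₁, hq, n, hnq, by group⟩
end

section
/- Let F be the free group on letters a₁,…,aₙ and let r be a nontrivial cyclically reduced word which is not a proper power. Then r⁻¹ is not a subword of r^d for any d > 0. -/
/-- A word over the alphabet `{a₁,…,aₙ}^{±1}` is (freely) reduced if it contains
no cancelling adjacent pair `a a⁻¹`. -/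
def WordReduced {n : ℕ} (w : List (Fin n × Bool)) : Prop :=
  List.Chain' (fun x y => ¬(x.1 = y.1 ∧ y.2 = !x.2)) w

/-- The formal inverse of a word. -/
def wordInv {n : ℕ} (w : List (Fin n × Bool)) : List (Fin n × Bool) :=
  (w.map fun x => (x.1, !x.2)).reverse

lemma wordInv_append {n : ℕ} (u v : List (Fin n × Bool)) :
    wordInv (u ++ v) = wordInv v ++ wordInv u := by
  simp [wordInv]

lemma wordInv_length {n : ℕ} (w : List (Fin n × Bool)) :
    (wordInv w).length = w.length := by
  simp [wordInv]

lemma getElem_idx_congr {α : Type*} (l : List α) {i j : ℕ} (h : i = j) (hi : i < l.length) :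
    l[i] = l[j]'(h ▸ hi) := by subst h; rfl

/-- A reduced word equal to its own formal inverse is empty. -/
lemma self_inv_nil {n : ℕ} (w : List (Fin n × Bool)) (hred : WordReduced w)
    (h : wordInv w = w) : w = [] := by
  by_contra hne
  have hm : 0 < w.length := List.length_pos_iff.mpr hne
  set m := w.length with hmdef
  have key : ∀ i (hi : i < m), w[i] = ((w[m - 1 - i]'(by omega)).1, !(w[m - 1 - i]'(by omega)).2) := by
    intro i hi
    have : (wordInv w)[i]'(by rw [wordInv_length]; exact hi) = w[i] := by
      simp only [h]
    rw [← this]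
    simp only [wordInv]
    rw [List.getElem_reverse]
    simp [hmdef]
  set i := (m - 1) / 2 with hidef
  have hi : i < m := by omega
  have hj : m - 1 - i = i ∨ m - 1 - i = i + 1 := by omega
  rcases hj with hj | hj
  · have hkey := key i hi
    rw [getElem_idx_congr w hj] at hkey
    have h2 := congrArg Prod.snd hkey
    simp at h2
  · have hkey := key i hi
    rw [getElem_idx_congr w hj] at hkey
    have hchain := List.isChain_iff_getElem.mp hred i (by omega)
    apply hchain
    constructor
    · rw [hkey]
    have h2 := congrArg Prod.snd hkey
    simp only at h2
    rw [h2]; simp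

/-- A short infix of `r^d` is an infix of `r ++ r`. -/
lemma infix_flatten {n : ℕ} (r : List (Fin n × Bool)) :
    ∀ (d : ℕ) (w : List (Fin n × Bool)), w <:+: (List.replicate d r).flatten →
      w.length ≤ r.length → w <:+: r ++ r
  | 0, w, h, _ => by
      simp only [List.replicate_zero, List.flatten_nil] at h
      rw [List.infix_nil] at h
      simp [h]
  | (d+1), w, h, hl => by
      rw [List.replicate_succ, List.flatten_cons] at h
      obtain ⟨s, t, hst⟩ := h
      rcases le_or_gt r.length s.length with hle | hlt
      · -- r is a prefix of s, so w is an infix of the rest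
        have hrp : r <+: s ++ (w ++ t) := by
          rw [show s ++ (w ++ t) = s ++ w ++ t by simp, hst]
          exact List.prefix_append _ _
        have hsp : s <+: s ++ (w ++ t) := List.prefix_append _ _
        obtain ⟨s', hs'⟩ := List.prefix_of_prefix_length_le hrp hsp hle
        have hF : s' ++ w ++ t = (List.replicate d r).flatten := by
          have := hst
          rw [← hs'] at this
          simpa using this
        exact infix_flatten r d w ⟨s', t, hF⟩ hl
      · -- s ++ w is a prefix of r ++ r
        rcases Nat.eq_zero_or_pos d with hd0 | hd0
        · subst hd0
          simp only [List.replicate_zero, List.flatten_nil, List.append_nil] at hst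
          exact List.IsInfix.trans ⟨s, t, hst⟩ ((List.prefix_append r r).isInfix)
        · obtain ⟨d', rfl⟩ : ∃ d', d = d' + 1 := ⟨d - 1, by omega⟩
          rw [List.replicate_succ, List.flatten_cons] at hst
          have hsw : s ++ w <+: (r ++ r) ++ (List.replicate d' r).flatten := by
            refine ⟨t, ?_⟩
            rw [show s ++ w ++ t = s ++ w ++ t by rfl]
            rw [hst]
            simp
          have hlen : (s ++ w).length ≤ (r ++ r).length := by
            simp only [List.length_append]; omega
          have : s ++ w <+: r ++ r :=
            List.prefix_of_prefix_length_le hsw (List.prefix_append _ _) hlen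
          exact List.IsInfix.trans ⟨s, [], by simp⟩ this.isInfix

/-- A length-`|r|` infix of `r ++ r` is a rotation of `r`. -/
lemma eq_rotation {n : ℕ} (r w : List (Fin n × Bool)) (h : w <:+: r ++ r)
    (hl : w.length = r.length) :
    ∃ u v, r = u ++ v ∧ w = v ++ u := by
  obtain ⟨s, t, hst⟩ := h
  have hlen := congrArg List.length hst
  simp only [List.length_append] at hlen
  have hs : s.length ≤ r.length := by omega
  refine ⟨r.take s.length, r.drop s.length, (List.take_append_drop _ _).symm, ?_⟩
  have h1 : w ++ t = (r ++ r).drop s.length := by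
    rw [← hst, show s ++ w ++ t = s ++ (w ++ t) by simp, List.drop_left]
  rw [List.drop_append, Nat.sub_eq_zero_of_le hs, List.drop_zero] at h1
  have h2 : w = (r.drop s.length ++ r).take w.length := by
    rw [← h1, List.take_left]
  rw [h2, List.take_append, List.length_drop]
  have hv : r.length - s.length ≤ w.length := by omega
  rw [List.take_of_length_le (by simp; omega), show w.length - (r.length - s.length) = s.length by omega]

theorem stmt6 {n : ℕ} (r : List (Fin n × Bool)) (hne : r ≠ [])
    (hcyc : WordReduced (r ++ r))
    (hpp : ∀ (s : List (Fin n × Bool)) (e : ℕ), 2 ≤ e → r ≠ (List.replicate e s).flatten)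
    (d : ℕ) (hd : 0 < d) :
    ¬ (wordInv r <:+: (List.replicate d r).flatten) := by
  intro hinfix
  have hinf2 : wordInv r <:+: r ++ r :=
    infix_flatten r d (wordInv r) hinfix (by rw [wordInv_length])
  obtain ⟨u, v, hr, hw⟩ := eq_rotation r (wordInv r) hinf2 (wordInv_length r)
  have heq : wordInv v ++ wordInv u = v ++ u := by
    rw [← wordInv_append, ← hr, hw]
  obtain ⟨hv, hu⟩ := List.append_inj heq (wordInv_length v)
  have hredu : WordReduced u := hcyc.infix (List.IsInfix.trans ⟨[], v, by simp [hr]⟩ ((List.prefix_append r r).isInfix))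
  have hredv : WordReduced v := hcyc.infix (List.IsInfix.trans ⟨u, [], by simp [hr]⟩ ((List.prefix_append r r).isInfix))
  have hu0 := self_inv_nil u hredu hu
  have hv0 := self_inv_nil v hredv hv
  apply hne
  rw [hr, hu0, hv0]
  rfl
end

section
/- Let r be a nontrivial cyclically reduced word in a free group F that is not a proper power, and let u be a reduced word with |u| ≥ |r|. Suppose r^d = x u y = x' u y' (graphical equalities) for some d > 0 where x' = x v with v nonempty. Then v = r_*^z for some 0 ≤ z ≤ d, where r_* is a cyclic permutation of r. -/
section Helpers
variable {α : Type*}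

lemma pow_len (d : ℕ) (r : List α) : ((List.replicate d r).flatten).length = d * r.length := by
  simp [List.length_flatten, List.map_replicate, List.sum_replicate, smul_eq_mul]

lemma pow_get (r : List α) : ∀ (d j : ℕ), j < d * r.length →
    ((List.replicate d r).flatten)[j]? = r[j % r.length]? := by
  intro d
  induction d with
  | zero => intro j hj; omega
  | succ d ih =>
    intro j hj
    rw [List.replicate_succ, List.flatten_cons]
    by_cases h : j < r.length
    · rw [List.getElem?_append_left h, Nat.mod_eq_of_lt h]
    · push_neg at h
      rw [List.getElem?_append_right h, Nat.mod_eq_sub_mod h]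
      have hm : 0 < r.length := by
        rcases Nat.eq_zero_or_pos r.length with h0 | h0
        · rw [h0, Nat.mul_zero] at hj; omega
        · exact h0
      exact ih (j - r.length) (by rw [Nat.succ_mul] at hj; omega)

lemma occ_get (a b c : List α) (i : ℕ) (hi : i < b.length) :
    (a ++ b ++ c)[a.length + i]? = b[i]? := by
  rw [List.append_assoc, List.getElem?_append_right (Nat.le_add_right _ _)]
  have : a.length + i - a.length = i := by omega
  rw [this, List.getElem?_append_left hi]

lemma pow_rotate (σ : List α) (hσ : σ ≠ []) (e k : ℕ) :
    ((List.replicate e σ).flatten).rotate k = (List.replicate e (σ.rotate k)).flatten := by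
  have hg : 0 < σ.length := List.length_pos_iff.mpr hσ
  rcases Nat.eq_zero_or_pos e with he | he
  · subst he; simp
  have hlen : ((List.replicate e σ).flatten).length = e * σ.length := pow_len e σ
  have hpos : 0 < e * σ.length := Nat.mul_pos he hg
  apply List.ext_getElem?
  intro i
  by_cases hie : i < e * σ.length
  · rw [List.getElem?_rotate (show i < ((List.replicate e σ).flatten).length by
        rw [hlen]; exact hie), hlen,
      pow_get σ e _ (Nat.mod_lt _ hpos),
      Nat.mod_mod_of_dvd _ (dvd_mul_left σ.length e),
      pow_get (σ.rotate k) e i (by rw [List.length_rotate]; exact hie),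
      List.length_rotate, List.getElem?_rotate (Nat.mod_lt i hg), Nat.mod_add_mod]
  · push_neg at hie
    rw [List.getElem?_eq_none (by rw [List.length_rotate, hlen]; exact hie),
      List.getElem?_eq_none (by rw [pow_len, List.length_rotate]; exact hie)]

lemma cyclic_period_power (ρ : List α) (t : ℕ) (ht : 0 < t) (htm : t < ρ.length)
    (H : ∀ j < ρ.length, ρ[j]? = ρ[(j + t) % ρ.length]?) :
    ∃ (σ : List α) (e : ℕ), 2 ≤ e ∧ ρ = (List.replicate e σ).flatten := by
  set m := ρ.length with hmdef
  have hm : 0 < m := lt_trans ht htm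
  set g := Nat.gcd t m with hgdef
  have hgpos : 0 < g := Nat.gcd_pos_of_pos_left m ht
  have hgm : g ∣ m := Nat.gcd_dvd_right t m
  have hglt : g < m := lt_of_le_of_lt (Nat.gcd_le_left m ht) htm
  set e := m / g with hedef
  have heg : e * g = m := Nat.div_mul_cancel hgm
  have he : 2 ≤ e := by
    by_contra hc
    push_neg at hc
    interval_cases e <;> omega
  have C1 : ∀ (k : ℕ), ∀ j < m, ρ[j]? = ρ[(j + k * t) % m]? := by
    intro k
    induction k with
    | zero => intro j hj; rw [Nat.zero_mul, Nat.add_zero, Nat.mod_eq_of_lt hj]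
    | succ k ih =>
      intro j hj
      have h1 := ih j hj
      have h2 := H ((j + k * t) % m) (Nat.mod_lt _ hm)
      rw [Nat.mod_add_mod] at h2
      rw [h1, h2, Nat.succ_mul, ← Nat.add_assoc]
  have C2 : ∃ k : ℕ, k * t % m = g % m := by
    have hb := Nat.gcd_eq_gcd_ab t m
    set a := Nat.gcdA t m with hadef
    refine ⟨(a % (m : ℤ)).toNat, ?_⟩
    have hmz : (m : ℤ) ≠ 0 := by exact_mod_cast hm.ne'
    have hk : ((a % (m : ℤ)).toNat : ℤ) = a % m :=
      Int.toNat_of_nonneg (Int.emod_nonneg a hmz)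
    have h1 : (((a % (m : ℤ)).toNat : ℤ) * t) % m = (a * t) % m := by
      rw [hk, Int.mul_emod, Int.emod_emod_of_dvd _ dvd_rfl, ← Int.mul_emod]
    have h2 : (a * (t : ℤ)) % m = (g : ℤ) % m := by
      rw [mul_comm]
      conv_rhs => rw [hgdef]
      rw [hb, Int.add_mul_emod_self_left]
    have := h1.trans h2
    exact_mod_cast this
  obtain ⟨k, hk⟩ := C2
  have C3 : ∀ j < m, ρ[j]? = ρ[j % g]? := by
    intro j hj
    have hjg : j % g < m := lt_trans (Nat.mod_lt j hgpos) hglt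
    have key := C1 (k * (j / g)) (j % g) hjg
    have harith : (j % g + k * (j / g) * t) % m = j := by
      have h1 : k * (j / g) * t = j / g * (k * t) := by ring
      have h2 : (j / g) * (k * t) ≡ (j / g) * g [MOD m] := Nat.ModEq.mul_left _ hk
      have h3 : j % g + k * (j / g) * t ≡ j % g + j / g * g [MOD m] := by
        rw [h1]; exact Nat.ModEq.add_left _ h2
      rw [Nat.mod_add_div'] at h3
      calc (j % g + k * (j / g) * t) % m = j % m := h3
        _ = j := Nat.mod_eq_of_lt hj
    rw [harith] at key
    exact key.symm
  refine ⟨ρ.take g, e, he, ?_⟩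
  apply List.ext_getElem?
  intro i
  by_cases hi : i < m
  · have hlt : i < e * (ρ.take g).length := by
      rw [List.length_take, min_eq_left (le_of_lt hglt), heg]; exact hi
    rw [pow_get _ e i hlt, List.length_take, min_eq_left (le_of_lt hglt),
      List.getElem?_take, if_pos (Nat.mod_lt i hgpos), C3 i hi]
  · push_neg at hi
    rw [List.getElem?_eq_none hi, List.getElem?_eq_none]
    rw [pow_len, List.length_take, min_eq_left (le_of_lt hglt), heg]
    exact hi

end Helpers

theorem stmt7 {n : ℕ} (r u x y x' y' v : List (Fin n × Bool)) (d : ℕ) (hd : 0 < d)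
    (hrne : r ≠ []) (hcyc : WordReduced (r ++ r))
    (hpp : ∀ (s : List (Fin n × Bool)) (e : ℕ), 2 ≤ e → r ≠ (List.replicate e s).flatten)
    (hu : WordReduced u) (hlen : r.length ≤ u.length)
    (h1 : (List.replicate d r).flatten = x ++ u ++ y)
    (h2 : (List.replicate d r).flatten = x' ++ u ++ y')
    (hx' : x' = x ++ v) (hv : v ≠ []) :
    ∃ (z i : ℕ), z ≤ d ∧ v = (List.replicate z (r.rotate i)).flatten := by
  have hm : 0 < r.length := List.length_pos_iff.mpr hrne
  have hspos : 0 < v.length := List.length_pos_iff.mpr hv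
  have hb1 : x.length + u.length + y.length = d * r.length := by
    have := congrArg List.length h1
    rw [pow_len] at this
    simp only [List.length_append] at this
    omega
  have hb2 : x.length + v.length + u.length + y'.length = d * r.length := by
    have := congrArg List.length h2
    rw [pow_len, hx'] at this
    simp only [List.length_append] at this
    omega
  have occ1 : ∀ i < u.length, ((List.replicate d r).flatten)[x.length + i]? = u[i]? := by
    intro i hi; rw [h1]; exact occ_get x u y i hi
  have occ2 : ∀ i < u.length,
      ((List.replicate d r).flatten)[x.length + v.length + i]? = u[i]? := by
    intro i hi
    rw [h2, hx']
    have hxy : x.length + v.length = (x ++ v).length := by simp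
    rw [hxy]
    exact occ_get (x ++ v) u y' i hi
  have key : ∀ i < u.length,
      r[(x.length + i) % r.length]? = r[(x.length + v.length + i) % r.length]? := by
    intro i hi
    rw [← pow_get r d _ (by omega), ← pow_get r d _ (by omega)]
    exact (occ1 i hi).trans (occ2 i hi).symm
  have hρlen : (r.rotate (x.length % r.length)).length = r.length := List.length_rotate r _
  have Hρ : ∀ j < r.length, (r.rotate (x.length % r.length))[j]? =
      (r.rotate (x.length % r.length))[(j + v.length) % r.length]? := by
    intro j hj
    rw [List.getElem?_rotate (by rw [hρlen] at *; exact hj),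
      List.getElem?_rotate (by rw [hρlen] at *; exact Nat.mod_lt _ hm)]
    rw [Nat.add_mod_mod, Nat.mod_add_mod, Nat.add_mod_mod]
    have e1 : (j + x.length) % r.length = (x.length + j) % r.length := by
      congr 1; omega
    have e2 : (j + v.length + x.length) % r.length
        = (x.length + v.length + j) % r.length := by congr 1; omega
    rw [e1, e2]
    exact key j (lt_of_lt_of_le hj hlen)
  by_cases hdvd : r.length ∣ v.length
  · refine ⟨v.length / r.length, x.length % r.length, ?_, ?_⟩
    · have hsm : v.length / r.length * r.length = v.length := Nat.div_mul_cancel hdvd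
      have hz1 : (v.length / r.length + 1) * r.length ≤ d * r.length := by
        rw [Nat.succ_mul]; omega
      have := Nat.le_of_mul_le_mul_right hz1 hm
      omega
    · apply List.ext_getElem?
      intro j
      by_cases hj : j < v.length
      · have hvj : v[j]? = ((List.replicate d r).flatten)[x.length + j]? := by
          rw [h2, hx', List.append_assoc x v, List.append_assoc,
            List.getElem?_append_right (Nat.le_add_right _ _)]
          have hc : x.length + j - x.length = j := by omega
          rw [hc, List.append_assoc, List.getElem?_append_left hj]
        rw [hvj, pow_get r d _ (by omega)]
        have hjlt : j < v.length / r.length * (r.rotate (x.length % r.length)).length := by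
          rw [hρlen, Nat.div_mul_cancel hdvd]; exact hj
        rw [pow_get _ _ j hjlt, hρlen, List.getElem?_rotate (Nat.mod_lt _ hm),
          Nat.mod_add_mod, Nat.add_mod_mod, Nat.add_comm j x.length]
      · push_neg at hj
        rw [List.getElem?_eq_none hj, List.getElem?_eq_none
          (by rw [pow_len, hρlen, Nat.div_mul_cancel hdvd]; exact hj)]
  · exfalso
    have ht : 0 < v.length % r.length := by
      rcases Nat.eq_zero_or_pos (v.length % r.length) with h0 | h0
      · exact absurd (Nat.dvd_of_mod_eq_zero h0) hdvd
      · exact h0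
    have H' : ∀ j < (r.rotate (x.length % r.length)).length,
        (r.rotate (x.length % r.length))[j]? =
        (r.rotate (x.length % r.length))[(j + v.length % r.length)
          % (r.rotate (x.length % r.length)).length]? := by
      intro j hj
      rw [hρlen] at hj ⊢
      rw [Nat.add_mod_mod]
      exact Hρ j hj
    obtain ⟨σ, e, he, hρσ⟩ := cyclic_period_power _ _ ht
      (by rw [hρlen]; exact Nat.mod_lt _ hm) H'
    have hσne : σ ≠ [] := by
      intro hc
      rw [hc] at hρσ
      have h0 := hρlen
      rw [hρσ, pow_len] at h0
      simp at h0
      omega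
    have hr : r = ((List.replicate e σ).flatten).rotate (r.length - x.length % r.length) := by
      rw [← hρσ, List.rotate_rotate]
      have hq : x.length % r.length + (r.length - x.length % r.length) = r.length := by
        have := Nat.mod_lt x.length hm; omega
      rw [hq, List.rotate_length]
    rw [pow_rotate σ hσne e _] at hr
    exact hpp _ e he hr
end
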